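/- Let G₁ and G₂ be abelian groups, and let A be a finite subset of G₁ \ {0} of size k with ∑_{z∈A} z ≠ 0. Suppose φ : G₁ → G₂ is a group homomorphism whose kernel is disjoint from the set Υ(A) = A ∪ {x−y : x,y ∈ A, x≠y} ∪ {∑_{z∈A} z}. If every subset B of G₂ \ {0} of size k with ∑_{z∈B} z ≠ 0 admits an ordering whose partial sums are nonzero and pairwise distinct, then A admits an ordering (a₁,…,a_k) of its elements such that all partial sums s_i = a₁+⋯+a_i are nonzero and pairwise distinct. -/

import Mathlib

/-- An ordering of the finite set `A` (as a list) whose partial sums are all nonzero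
and pairwise distinct. -/
def IsAlspachOrdering {G : Type*} [AddCommGroup G] (A : Finset G) (l : List G) : Prop :=
  l.Nodup ∧ (∀ x, x ∈ l ↔ x ∈ A) ∧
    (∀ i : ℕ, 1 ≤ i → i ≤ l.length → (l.take i).sum ≠ 0) ∧
    (∀ i j : ℕ, 1 ≤ i → i < j → j ≤ l.length → (l.take i).sum ≠ (l.take j).sum)

theorem stmt0 {G₁ G₂ : Type*} [AddCommGroup G₁] [AddCommGroup G₂]
    (k : ℕ) (A : Finset G₁) (hA0 : (0 : G₁) ∉ A) (hcard : A.card = k)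
    (hsum : ∑ z ∈ A, z ≠ 0) (φ : G₁ →+ G₂)
    (hker : ∀ g : G₁, φ g = 0 →
      g ∉ ((A : Set G₁) ∪ {d | ∃ x ∈ A, ∃ y ∈ A, x ≠ y ∧ d = x - y} ∪ {∑ z ∈ A, z}))
    (hG₂ : ∀ B : Finset G₂, (0 : G₂) ∉ B → B.card = k → ∑ z ∈ B, z ≠ 0 →
      ∃ l : List G₂, IsAlspachOrdering B l) :
    ∃ l : List G₁, IsAlspachOrdering A l := by
  classical
  -- φ is injective on A
  have hinj : Set.InjOn φ (A : Set G₁) := by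
    intro x hx y hy hxy
    by_contra h
    exact hker (x - y) (by rw [map_sub, hxy, sub_self])
      (Or.inl (Or.inr ⟨x, hx, y, hy, h, rfl⟩))
  set B : Finset G₂ := A.image φ with hB
  have hB0 : (0 : G₂) ∉ B := by
    intro h0
    obtain ⟨a, ha, hφa⟩ := Finset.mem_image.1 h0
    exact hker a hφa (Or.inl (Or.inl ha))
  have hBcard : B.card = k := by
    rw [hB, Finset.card_image_of_injOn hinj, hcard]
  have hBsumeq : ∑ z ∈ B, z = φ (∑ z ∈ A, z) := by
    rw [hB, Finset.sum_image (fun x hx y hy => hinj hx hy), map_sum]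
  have hBsum : ∑ z ∈ B, z ≠ 0 := by
    rw [hBsumeq]
    intro h
    exact hker _ h (Or.inr rfl)
  obtain ⟨m, hmnd, hmmem, hm0, hmdist⟩ := hG₂ B hB0 hBcard hBsum
  -- pull back
  set g : G₂ → G₁ := Function.invFunOn φ (A : Set G₁) with hg
  have hgb : ∀ b ∈ m, g b ∈ (A : Set G₁) ∧ φ (g b) = b := by
    intro b hb
    have : b ∈ φ '' (A : Set G₁) := by
      obtain ⟨a, ha, hφa⟩ := Finset.mem_image.1 ((hmmem b).1 hb)
      exact ⟨a, ha, hφa⟩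
    exact ⟨Function.invFunOn_mem this, Function.invFunOn_eq this⟩
  set l : List G₁ := m.map g with hl
  have hmap : l.map φ = m := by
    rw [hl, List.map_map]
    have : m.map (φ ∘ g) = m.map id :=
      List.map_congr_left (fun b hb => (hgb b hb).2)
    rw [this, List.map_id]
  have hlen : l.length = m.length := List.length_map _
  have htake : ∀ i, φ ((l.take i).sum) = (m.take i).sum := by
    intro i
    rw [map_list_sum, List.map_take, hmap]
  refine ⟨l, ?_, ?_, ?_, ?_⟩
  · refine List.Nodup.map_on ?_ hmnd
    intro x hx y hy hxy
    have := congrArg φ hxy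
    rw [(hgb x hx).2, (hgb y hy).2] at this
    exact this
  · intro x
    constructor
    · intro hx
      obtain ⟨b, hb, rfl⟩ := List.mem_map.1 hx
      exact (hgb b hb).1
    · intro hx
      have hφx : φ x ∈ m := (hmmem (φ x)).2 (Finset.mem_image_of_mem φ hx)
      have : g (φ x) = x := hinj.leftInvOn_invFunOn hx
      exact List.mem_map.2 ⟨φ x, hφx, this⟩
  · intro i h1 h2 h
    apply hm0 i h1 (by rwa [← hlen])
    rw [← htake, h, map_zero]
  · intro i j h1 hij hj h
    apply hmdist i j h1 hij (by rwa [← hlen])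
    rw [← htake, ← htake, h]
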